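/- Let A be symmetric positive definite and L invertible lower triangular with positive diagonal such that the natural gradient G̃ = L·[tril(LᵀAL) − (1/2)(I + diag(LᵀAL))] vanishes. Then L·Lᵀ = A⁻¹. -/
import Mathlib


open Matrix

/-- Lower triangular part of a matrix (including the diagonal). -/
def tril {n : ℕ} (M : Matrix (Fin n) (Fin n) ℝ) : Matrix (Fin n) (Fin n) ℝ :=
  fun i j => if j ≤ i then M i j else 0

/-- Diagonal part of a matrix. -/
def diagPart {n : ℕ} (M : Matrix (Fin n) (Fin n) ℝ) : Matrix (Fin n) (Fin n) ℝ :=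
  Matrix.diagonal fun i => M i i

theorem stmt_14 {n : ℕ} (A L : Matrix (Fin n) (Fin n) ℝ)
    (hA : A.PosDef) (hLtri : ∀ i j : Fin n, i < j → L i j = 0)
    (hLdiag : ∀ i : Fin n, 0 < L i i) (hL : IsUnit L)
    (hG : L * (tril (Lᵀ * A * L) -
        (1 / 2 : ℝ) • ((1 : Matrix (Fin n) (Fin n) ℝ) + diagPart (Lᵀ * A * L))) = 0) :
    L * Lᵀ = A⁻¹ := by
  have hdet : IsUnit L.det := (Matrix.isUnit_iff_isUnit_det L).mp hL
  have hLinv : L⁻¹ * L = 1 := Matrix.nonsing_inv_mul L hdet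
  set M := Lᵀ * A * L with hM
  have hX : tril M - (1 / 2 : ℝ) • ((1 : Matrix (Fin n) (Fin n) ℝ) + diagPart M) = 0 := by
    have := congrArg (fun Y => L⁻¹ * Y) hG
    simpa [← Matrix.mul_assoc, hLinv] using this
  have hXeq : tril M = (1 / 2 : ℝ) • ((1 : Matrix (Fin n) (Fin n) ℝ) + diagPart M) :=
    sub_eq_zero.mp hX
  have hMsym : Mᵀ = M := by
    have hAsym : Aᵀ = A := hA.isHermitian.eq
    simp [hM, Matrix.transpose_mul, Matrix.mul_assoc, hAsym]
  have hdiag : ∀ i : Fin n, M i i = 1 := by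
    intro i
    have h := congrFun (congrFun hXeq i) i
    simp [tril, diagPart, Matrix.one_apply, Matrix.diagonal] at h
    linarith
  have hMone : M = 1 := by
    have hlow : ∀ i j : Fin n, j < i → M i j = 0 := by
      intro i j hij
      have h := congrFun (congrFun hXeq i) j
      simp [tril, diagPart, Matrix.one_apply, Matrix.diagonal, hij.le, hij.ne',
        (Fin.ne_of_lt hij).symm] at h
      exact h
    ext i j
    rcases lt_trichotomy i j with h | h | h
    · have := hlow j i h
      have h2 : M i j = M j i := by
        have := congrFun (congrFun hMsym j) i
        simpa [Matrix.transpose_apply] using this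
      simp [h2, this, Matrix.one_apply, h.ne]
    · subst h; simp [hdiag i, Matrix.one_apply]
    · simp [hlow i j h, Matrix.one_apply, h.ne']
  -- From Lᵀ * A * L = 1 deduce (L * Lᵀ) * A = 1
  have hLinv2 : L * L⁻¹ = 1 := Matrix.mul_nonsing_inv L hdet
  have hTinv : (Lᵀ)⁻¹ * Lᵀ = 1 := Matrix.nonsing_inv_mul Lᵀ (by simpa using hdet)
  have key : L * Lᵀ * A = 1 := by
    have h1 : Lᵀ * A = L⁻¹ := by
      have := congrArg (fun Y => Y * L⁻¹) hMone
      rw [hM] at this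
      simpa [Matrix.mul_assoc, hLinv2] using this
    calc L * Lᵀ * A = L * (Lᵀ * A) := by rw [Matrix.mul_assoc]
      _ = L * L⁻¹ := by rw [h1]
      _ = 1 := hLinv2
  exact Matrix.inv_eq_left_inv key ▸ rfl
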